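/- Let Q be an N × p real matrix with orthonormal columns, and let ξ be a probability vector on {1,…,N} with R(ξ) = Qᵀ D(ξ) Q invertible, where D(ξ) = diag(ξ₁,…,ξ_N). Then the largest eigenvalue of U(ξ) = R(ξ)^{-1} S(ξ) R(ξ)^{-1}, where S(ξ) = Qᵀ D(ξ)² Q, is at least 1. -/

import Mathlib

open Matrix

/-- Rayleigh quotient bound: for a real symmetric matrix, the quadratic form at a
unit vector is at most some element of the spectrum (an eigenvalue). -/
lemma aux_quad_le_spectrum {p : ℕ} (U : Matrix (Fin p) (Fin p) ℝ) (hU : U.IsHermitian)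
    (w : Fin p → ℝ) (hw : w ⬝ᵥ w = 1) :
    ∃ μ ∈ spectrum ℝ U, w ⬝ᵥ (U *ᵥ w) ≤ μ := by
  have hpne : Nonempty (Fin p) := by
    by_contra h
    rw [not_nonempty_iff] at h
    have h0 : w ⬝ᵥ w = 0 := by simp [dotProduct]
    rw [h0] at hw; norm_num at hw
  classical
  set V : Matrix (Fin p) (Fin p) ℝ := (hU.eigenvectorUnitary : Matrix (Fin p) (Fin p) ℝ) with hV
  have hVstar : star V = Vᵀ := by
    rw [star_eq_conjTranspose, conjTranspose_eq_transpose_of_trivial]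
  set c : Fin p → ℝ := Vᵀ *ᵥ w with hc
  have hdiag : (RCLike.ofReal ∘ hU.eigenvalues : Fin p → ℝ) = hU.eigenvalues := by
    funext i; simp
  have hVV : V * Vᵀ = 1 := by
    rw [← hVstar]
    exact mem_unitaryGroup_iff.mp (Matrix.IsHermitian.eigenvectorUnitary hU).2
  -- quadratic form in terms of eigenvalues
  have key : w ⬝ᵥ (U *ᵥ w) = ∑ i, hU.eigenvalues i * c i ^ 2 := by
    conv_lhs => rw [hU.spectral_theorem, Unitary.conjStarAlgAut_apply, ← hV, hVstar, hdiag]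
    rw [← mulVec_mulVec, ← mulVec_mulVec, dotProduct_mulVec, ← mulVec_transpose, hc]
    simp only [dotProduct, mulVec_diagonal]
    exact Finset.sum_congr rfl fun i _ => by ring
  have hc1 : ∑ i, c i ^ 2 = 1 := by
    have hcc : c ⬝ᵥ c = 1 := by
      nth_rewrite 1 [hc]
      rw [mulVec_transpose, ← dotProduct_mulVec, hc, mulVec_mulVec, hVV, one_mulVec, hw]
    rw [← hcc]
    exact Finset.sum_congr rfl fun i _ => by rw [pow_two]
  obtain ⟨i0, hi0⟩ := Finite.exists_max hU.eigenvalues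
  refine ⟨hU.eigenvalues i0, hU.eigenvalues_mem_spectrum_real i0, ?_⟩
  rw [key]
  calc ∑ i, hU.eigenvalues i * c i ^ 2
      ≤ ∑ i, hU.eigenvalues i0 * c i ^ 2 :=
        Finset.sum_le_sum fun i _ => mul_le_mul_of_nonneg_right (hi0 i) (sq_nonneg _)
    _ = hU.eigenvalues i0 := by rw [← Finset.mul_sum, hc1, mul_one]

/-- For any design ξ with R(ξ) invertible, the largest
eigenvalue of U(ξ) = R⁻¹ S R⁻¹ is at least 1: some eigenvalue is ≥ 1. -/
theorem stmt13 {N p : ℕ} (hp : 0 < p)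
    (Q : Matrix (Fin N) (Fin p) ℝ) (hQ : Qᵀ * Q = 1)
    (ξ : Fin N → ℝ) (hξ0 : ∀ i, 0 ≤ ξ i) (hξ1 : ∑ i, ξ i = 1)
    (R S U : Matrix (Fin p) (Fin p) ℝ)
    (hR : R = Qᵀ * diagonal ξ * Q) (hRinv : IsUnit R.det)
    (hS : S = Qᵀ * (diagonal ξ * diagonal ξ) * Q)
    (hU : U = R⁻¹ * S * R⁻¹) :
    ∃ μ ∈ spectrum ℝ U, (1 : ℝ) ≤ μ := by
  classical
  have hQH : Qᴴ = Qᵀ := conjTranspose_eq_transpose_of_trivial Q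
  -- Hermitianness
  have hRh : R.IsHermitian := by
    have h := isHermitian_conjTranspose_mul_mul Q (isHermitian_diagonal ξ)
    rwa [hQH, ← hR] at h
  have hSh : S.IsHermitian := by
    have h := isHermitian_conjTranspose_mul_mul Q (isHermitian_diagonal (fun i => ξ i * ξ i))
    rwa [hQH, ← diagonal_mul_diagonal, ← hS] at h
  have hRih : (R⁻¹).IsHermitian := hRh.inv
  have hUh : U.IsHermitian := by
    have h := isHermitian_conjTranspose_mul_mul R⁻¹ hSh
    rwa [hRih, ← hU] at h
  -- eigenvector of R
  set j : Fin p := ⟨0, hp⟩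
  set w : Fin p → ℝ := ⇑(hRh.eigenvectorBasis j) with hwdef
  set lam : ℝ := hRh.eigenvalues j with hlamdef
  have hRw : R *ᵥ w = lam • w := hRh.mulVec_eigenvectorBasis j
  have hdet : R.det ≠ 0 := hRinv.ne_zero
  have hlam : lam ≠ 0 := by
    intro h0
    apply hdet
    rw [hRh.det_eq_prod_eigenvalues]
    refine Finset.prod_eq_zero (Finset.mem_univ j) ?_
    simp [← hlamdef, h0]
  -- lam = w ⬝ᵥ R *ᵥ w
  have hlam_eq : lam = w ⬝ᵥ (R *ᵥ w) := by
    have := hRh.eigenvalues_eq j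
    simpa [← hwdef, ← hlamdef] using this
  have hww : w ⬝ᵥ w = 1 := by
    have h : lam = lam * (w ⬝ᵥ w) := by
      conv_lhs => rw [hlam_eq, hRw]
      rw [dotProduct_smul, smul_eq_mul]
    have h2 : lam * (w ⬝ᵥ w) - lam * 1 = 0 := by rw [← h]; ring
    rw [← mul_sub] at h2
    rcases mul_eq_zero.mp h2 with h3 | h3
    · exact absurd h3 hlam
    · linarith [sub_eq_zero.mp h3]
  -- R⁻¹ w = lam⁻¹ w
  have hRiw : R⁻¹ *ᵥ w = lam⁻¹ • w := by
    have h1 : R⁻¹ *ᵥ (R *ᵥ w) = w := by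
      rw [mulVec_mulVec, nonsing_inv_mul R hRinv, one_mulVec]
    rw [hRw, mulVec_smul] at h1
    have := congrArg (fun v => lam⁻¹ • v) h1
    simpa [smul_smul, inv_mul_cancel₀ hlam] using this
  -- quadratic forms via y = Q w
  set y : Fin N → ℝ := Q *ᵥ w with hydef
  have quadform : ∀ d : Fin N → ℝ, w ⬝ᵥ ((Qᵀ * diagonal d * Q) *ᵥ w) = ∑ i, d i * y i ^ 2 := by
    intro d
    rw [← mulVec_mulVec, ← mulVec_mulVec, dotProduct_mulVec, vecMul_transpose, ← hydef]
    simp only [dotProduct, mulVec_diagonal]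
    exact Finset.sum_congr rfl fun i _ => by ring
  have hRquad : w ⬝ᵥ (R *ᵥ w) = ∑ i, ξ i * y i ^ 2 := by rw [hR]; exact quadform ξ
  have hSquad : w ⬝ᵥ (S *ᵥ w) = ∑ i, ξ i ^ 2 * y i ^ 2 := by
    rw [hS, diagonal_mul_diagonal, quadform (fun i => ξ i * ξ i)]
    exact Finset.sum_congr rfl fun i _ => by ring
  have hyy : ∑ i, y i ^ 2 = 1 := by
    have h := quadform (fun _ => 1)
    rw [show diagonal (fun _ => (1 : ℝ)) = (1 : Matrix (Fin N) (Fin N) ℝ) from diagonal_one,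
      Matrix.mul_one, hQ, one_mulVec, hww] at h
    simpa using h.symm
  -- Cauchy–Schwarz
  have hCS : lam ^ 2 ≤ ∑ i, ξ i ^ 2 * y i ^ 2 := by
    have h := Finset.sum_mul_sq_le_sq_mul_sq Finset.univ (fun i => ξ i * y i) y
    have e1 : ∑ i, (ξ i * y i) * y i = lam := by
      rw [hlam_eq, hRquad]; exact Finset.sum_congr rfl fun i _ => by ring
    have e2 : ∑ i, (ξ i * y i) ^ 2 = ∑ i, ξ i ^ 2 * y i ^ 2 :=
      Finset.sum_congr rfl fun i _ => by ring
    rw [e1, e2, hyy, mul_one] at h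
    exact h
  -- the quadratic form of U
  have hUquad : w ⬝ᵥ (U *ᵥ w) = lam⁻¹ * (lam⁻¹ * (w ⬝ᵥ (S *ᵥ w))) := by
    rw [hU, ← mulVec_mulVec, ← mulVec_mulVec, hRiw, mulVec_smul, mulVec_smul, dotProduct_smul,
      smul_eq_mul, dotProduct_mulVec]
    congr 1
    have htr : R⁻¹ᵀ = R⁻¹ := by
      rw [← conjTranspose_eq_transpose_of_trivial]; exact hRih
    have hwR : w ᵥ* R⁻¹ = lam⁻¹ • w := by
      rw [← mulVec_transpose, htr, hRiw]
    rw [hwR, smul_dotProduct, smul_eq_mul]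
  have hone : (1 : ℝ) ≤ w ⬝ᵥ (U *ᵥ w) := by
    rw [hUquad, hSquad]
    have h1 : lam⁻¹ * lam = 1 := inv_mul_cancel₀ hlam
    nlinarith [hCS, sq_nonneg lam⁻¹, sq_nonneg lam]
  obtain ⟨μ, hμmem, hμ⟩ := aux_quad_le_spectrum U hUh w hww
  exact ⟨μ, hμmem, le_trans hone hμ⟩
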